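/- Second-best allocation (relaxed screening problem): fix n0, n1 ≥ 0 and λ ∈ (0,1], and define on the box B = [0,n0]×[0,n1]×[0,n0]×[0,n1] the relaxed objective Φ(q0L, q1L, q0S, q1S) = λ·( V_S(q0S,q1S) − V_S(q0L,q1L) + V_L(q0L,q1L) ) + (1−λ)·V_L(q0L,q1L). Then: (a) if λ > λ*(n0), the point (q0L,q1L,q0S,q1S) = (n0, 0, n0, n1) is a maximizer of Φ on B; (b) if λ < λ*(n0), the point (n0, n1, n0, n1) is a maximizer of Φ on B. -/

import Mathlib

/-- The denominator `D(n0,n1) = σ²(n0+n1+2 n0 n1) + (1+n0)(1+n1)`. -/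
noncomputable def Dden (σ n0 n1 : ℝ) : ℝ :=
  σ^2 * (n0 + n1 + 2*n0*n1) + (1+n0)*(1+n1)

/-- Forecaster value `V_L`. -/
noncomputable def VL (σ n0 n1 : ℝ) : ℝ :=
  σ^4 * (n0 + n1 + 2*n0*n1) / Dden σ n0 n1

/-- Nowcaster value `V_S`. -/
noncomputable def VS (σ n0 n1 : ℝ) : ℝ :=
  VL σ n0 n1 + (3*σ^2*n0*n1 + 2*σ^2*n1 + n1 + n0*n1) / Dden σ n0 n1

/-- The threshold `λ*(q0)`. -/
noncomputable def lamStar (σ q0 : ℝ) : ℝ :=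
  (σ^2 * (q0+1) / ((q0+1) + σ^2 * (2*q0+1)))^2

lemma Dpos (σ x y : ℝ) (hσ : 0 < σ) (hx : 0 ≤ x) (hy : 0 ≤ y) : 0 < Dden σ x y := by
  unfold Dden
  nlinarith [sq_nonneg σ, mul_nonneg hx hy, mul_nonneg (sq_nonneg σ)
    (by nlinarith [mul_nonneg hx hy] : (0:ℝ) ≤ x + y + 2*x*y)]

lemma VS_eq (σ x y : ℝ) : VS σ x y =
    (σ^4 * (x + y + 2*x*y) + (3*σ^2*x*y + 2*σ^2*y + y + x*y)) / Dden σ x y := by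
  unfold VS VL
  rw [← add_div]

/-- `VS` is monotone in the first argument. -/
lemma VS_mono1 (σ a b y : ℝ) (hσ : 0 < σ) (ha : 0 ≤ a) (hab : a ≤ b) (hy : 0 ≤ y) :
    VS σ a y ≤ VS σ b y := by
  have hb : 0 ≤ b := ha.trans hab
  rw [VS_eq, VS_eq, div_le_div_iff₀ (Dpos σ a y hσ ha hy) (Dpos σ b y hσ hb hy)]
  have key : (σ^4 * (b + y + 2*b*y) + (3*σ^2*b*y + 2*σ^2*y + y + b*y)) * Dden σ a y
      - (σ^4 * (a + y + 2*a*y) + (3*σ^2*a*y + 2*σ^2*y + y + a*y)) * Dden σ b y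
      = (b - a) * σ^4 := by
    unfold Dden; ring
  nlinarith [mul_nonneg (sub_nonneg.2 hab) (pow_pos hσ 4).le]

/-- `VS` is monotone in the second argument. -/
lemma VS_mono2 (σ x c d : ℝ) (hσ : 0 < σ) (hx : 0 ≤ x) (hc : 0 ≤ c) (hcd : c ≤ d) :
    VS σ x c ≤ VS σ x d := by
  have hd : 0 ≤ d := hc.trans hcd
  rw [VS_eq, VS_eq, div_le_div_iff₀ (Dpos σ x c hσ hx hc) (Dpos σ x d hσ hx hd)]
  have key : (σ^4 * (x + d + 2*x*d) + (3*σ^2*x*d + 2*σ^2*d + d + x*d)) * Dden σ x c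
      - (σ^4 * (x + c + 2*x*c) + (3*σ^2*x*c + 2*σ^2*c + c + x*c)) * Dden σ x d
      = (d - c) * ((1+x) + σ^2*(2*x+1))^2 := by
    unfold Dden; ring
  nlinarith [mul_nonneg (sub_nonneg.2 hcd) (sq_nonneg ((1+x) + σ^2*(2*x+1)))]

lemma W_eq (σ lam x y : ℝ) (hσ : 0 < σ) (hx : 0 ≤ x) (hy : 0 ≤ y) :
    VL σ x y - lam * VS σ x y =
      ((1-lam) * (σ^4 * (x + y + 2*x*y)) - lam * (3*σ^2*x*y + 2*σ^2*y + y + x*y))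
        / Dden σ x y := by
  have hD := (Dpos σ x y hσ hx hy).ne'
  unfold VS VL
  field_simp
  ring

/-- `VL - lam·VS` is monotone increasing in the first argument. -/
lemma W_mono1 (σ lam a b y : ℝ) (hσ : 0 < σ) (hl0 : 0 ≤ lam) (hl1 : lam ≤ 1)
    (ha : 0 ≤ a) (hab : a ≤ b) (hy : 0 ≤ y) :
    VL σ a y - lam * VS σ a y ≤ VL σ b y - lam * VS σ b y := by
  have hb : 0 ≤ b := ha.trans hab
  rw [W_eq σ lam a y hσ ha hy, W_eq σ lam b y hσ hb hy,
    div_le_div_iff₀ (Dpos σ a y hσ ha hy) (Dpos σ b y hσ hb hy)]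
  have key : ((1-lam) * (σ^4 * (b + y + 2*b*y)) - lam * (3*σ^2*b*y + 2*σ^2*y + y + b*y))
        * Dden σ a y
      - ((1-lam) * (σ^4 * (a + y + 2*a*y)) - lam * (3*σ^2*a*y + 2*σ^2*y + y + a*y))
        * Dden σ b y
      = (b - a) * σ^4 * ((1-lam) * (1+y)^2 + lam * (y * (2+y))) := by
    unfold Dden; ring
  nlinarith [mul_nonneg (mul_nonneg (sub_nonneg.2 hab) (pow_pos hσ 4).le)
    (add_nonneg (mul_nonneg (sub_nonneg.2 hl1) (sq_nonneg (1+y)))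
      (mul_nonneg hl0 (mul_nonneg hy (by linarith : (0:ℝ) ≤ 2 + y))))]

/-- In the second argument, `VL - lam·VS` moves according to the sign of
`σ⁴(1+x)² - lam·A(x)²`. -/
lemma W_q1 (σ lam x c d : ℝ) (hσ : 0 < σ) (hx : 0 ≤ x) (hc : 0 ≤ c) (hcd : c ≤ d)
    (hth : σ^4 * (1+x)^2 ≤ lam * ((1+x) + σ^2*(2*x+1))^2) :
    VL σ x d - lam * VS σ x d ≤ VL σ x c - lam * VS σ x c := by
  have hd : 0 ≤ d := hc.trans hcd
  rw [W_eq σ lam x c hσ hx hc, W_eq σ lam x d hσ hx hd,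
    div_le_div_iff₀ (Dpos σ x d hσ hx hd) (Dpos σ x c hσ hx hc)]
  have key : ((1-lam) * (σ^4 * (x + c + 2*x*c)) - lam * (3*σ^2*x*c + 2*σ^2*c + c + x*c))
        * Dden σ x d
      - ((1-lam) * (σ^4 * (x + d + 2*x*d)) - lam * (3*σ^2*x*d + 2*σ^2*d + d + x*d))
        * Dden σ x c
      = (d - c) * (lam * ((1+x) + σ^2*(2*x+1))^2 - σ^4 * (1+x)^2) := by
    unfold Dden; ring
  nlinarith [mul_nonneg (sub_nonneg.2 hcd) (sub_nonneg.2 hth)]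

lemma W_q1' (σ lam x c d : ℝ) (hσ : 0 < σ) (hx : 0 ≤ x) (hc : 0 ≤ c) (hcd : c ≤ d)
    (hth : lam * ((1+x) + σ^2*(2*x+1))^2 ≤ σ^4 * (1+x)^2) :
    VL σ x c - lam * VS σ x c ≤ VL σ x d - lam * VS σ x d := by
  have hd : 0 ≤ d := hc.trans hcd
  rw [W_eq σ lam x c hσ hx hc, W_eq σ lam x d hσ hx hd,
    div_le_div_iff₀ (Dpos σ x c hσ hx hc) (Dpos σ x d hσ hx hd)]
  have key : ((1-lam) * (σ^4 * (x + d + 2*x*d)) - lam * (3*σ^2*x*d + 2*σ^2*d + d + x*d))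
        * Dden σ x c
      - ((1-lam) * (σ^4 * (x + c + 2*x*c)) - lam * (3*σ^2*x*c + 2*σ^2*c + c + x*c))
        * Dden σ x d
      = (d - c) * (σ^4 * (1+x)^2 - lam * ((1+x) + σ^2*(2*x+1))^2) := by
    unfold Dden; ring
  nlinarith [mul_nonneg (sub_nonneg.2 hcd) (sub_nonneg.2 hth)]

lemma lamStar_mul (σ x : ℝ) (hσ : 0 < σ) (hx : 0 ≤ x) :
    lamStar σ x * ((1+x) + σ^2*(2*x+1))^2 = σ^4 * (1+x)^2 := by
  have hA : ((x+1) + σ^2*(2*x+1)) ≠ 0 := by positivity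
  unfold lamStar
  field_simp
  ring

/-- Second-best allocation in the relaxed screening problem: if `λ > λ*(n0)` the
allocation `(n0,0,n0,n1)` maximizes the relaxed objective on the box, while if
`λ < λ*(n0)` the full-access allocation `(n0,n1,n0,n1)` maximizes it. -/
theorem stmt12 (σ : ℝ) (hσ : 0 < σ) (n0 n1 : ℝ) (h0 : 0 ≤ n0) (h1 : 0 ≤ n1)
    (lam : ℝ) (hl0 : 0 < lam) (hl1 : lam ≤ 1) :
    (lamStar σ n0 < lam →
      ∀ q0L q1L q0S q1S : ℝ,
        0 ≤ q0L → q0L ≤ n0 → 0 ≤ q1L → q1L ≤ n1 →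
        0 ≤ q0S → q0S ≤ n0 → 0 ≤ q1S → q1S ≤ n1 →
        lam * (VS σ q0S q1S - VS σ q0L q1L + VL σ q0L q1L)
            + (1-lam) * VL σ q0L q1L ≤
        lam * (VS σ n0 n1 - VS σ n0 0 + VL σ n0 0) + (1-lam) * VL σ n0 0) ∧
    (lam < lamStar σ n0 →
      ∀ q0L q1L q0S q1S : ℝ,
        0 ≤ q0L → q0L ≤ n0 → 0 ≤ q1L → q1L ≤ n1 →
        0 ≤ q0S → q0S ≤ n0 → 0 ≤ q1S → q1S ≤ n1 →
        lam * (VS σ q0S q1S - VS σ q0L q1L + VL σ q0L q1L)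
            + (1-lam) * VL σ q0L q1L ≤
        lam * (VS σ n0 n1 - VS σ n0 n1 + VL σ n0 n1) + (1-lam) * VL σ n0 n1) := by
  have hA2 : (0:ℝ) < ((1+n0) + σ^2*(2*n0+1))^2 := by positivity
  constructor
  · intro hlam q0L q1L q0S q1S h0L h0L' h1L h1L' h0S h0S' h1S h1S'
    have hVS : VS σ q0S q1S ≤ VS σ n0 n1 :=
      (VS_mono1 σ q0S n0 q1S hσ h0S h0S' h1S).trans
        (VS_mono2 σ n0 q1S n1 hσ h0 h1S h1S')
    have hth : σ^4 * (1+n0)^2 ≤ lam * ((1+n0) + σ^2*(2*n0+1))^2 := by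
      have := lamStar_mul σ n0 hσ h0
      nlinarith
    have hW : VL σ q0L q1L - lam * VS σ q0L q1L ≤ VL σ n0 0 - lam * VS σ n0 0 :=
      (W_mono1 σ lam q0L n0 q1L hσ hl0.le hl1 h0L h0L' h1L).trans
        (W_q1 σ lam n0 0 q1L hσ h0 le_rfl h1L hth)
    nlinarith [mul_le_mul_of_nonneg_left hVS hl0.le]
  · intro hlam q0L q1L q0S q1S h0L h0L' h1L h1L' h0S h0S' h1S h1S'
    have hVS : VS σ q0S q1S ≤ VS σ n0 n1 :=
      (VS_mono1 σ q0S n0 q1S hσ h0S h0S' h1S).trans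
        (VS_mono2 σ n0 q1S n1 hσ h0 h1S h1S')
    have hth : lam * ((1+n0) + σ^2*(2*n0+1))^2 ≤ σ^4 * (1+n0)^2 := by
      have := lamStar_mul σ n0 hσ h0
      nlinarith
    have hW : VL σ q0L q1L - lam * VS σ q0L q1L ≤ VL σ n0 n1 - lam * VS σ n0 n1 :=
      (W_mono1 σ lam q0L n0 q1L hσ hl0.le hl1 h0L h0L' h1L).trans
        (W_q1' σ lam n0 q1L n1 hσ h0 h1L h1L' hth)
    nlinarith [mul_le_mul_of_nonneg_left hVS hl0.le]
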